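/- arXiv:1104.2699 — 2 statements merged into one kernel-verified Lean document; each statement's English description precedes it below -/
import Mathlib

section
/- The modified Lucas polynomials satisfy Σ_{k=0}^{⌊n/2⌋} (-s)^k C(n,k) L*_{n-2k}(x,s) = x^n for all n ≥ 0. -/
def lucasP {R : Type*} [CommRing R] (x s : R) : ℕ → R
  | 0 => 2
  | 1 => x
  | n + 2 => x * lucasP x s (n + 1) + s * lucasP x s n

def lucasStar {R : Type*} [CommRing R] (x s : R) (n : ℕ) : R :=
  if n = 0 then 1 else lucasP x s n

private lemma lucasP_add_two {R : Type*} [CommRing R] (x s : R) (n : ℕ) :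
    lucasP x s (n + 2) = x * lucasP x s (n + 1) + s * lucasP x s n := rfl

private lemma lucasStar_pos {R : Type*} [CommRing R] (x s : R) {n : ℕ} (h : n ≠ 0) :
    lucasStar x s n = lucasP x s n := if_neg h

/-- telescoping identity for interior terms -/
private lemma tele {R : Type*} [CommRing R] (x s : R) (n k : ℕ) (h : 2 * k + 2 ≤ n) :
    (-s) ^ k * ((n + 1).choose k : R) * lucasStar x s (n + 1 - 2 * k)
      - x * ((-s) ^ k * (n.choose k : R) * lucasStar x s (n - 2 * k))
    = (if k = 0 then 0 else (-s) ^ k * (n.choose (k - 1) : R) * lucasP x s (n + 1 - 2 * k))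
      - (-s) ^ (k + 1) * (n.choose k : R) * lucasP x s (n - 1 - 2 * k) := by
  obtain ⟨d, rfl⟩ := Nat.exists_eq_add_of_le h
  have e1 : 2 * k + 2 + d + 1 - 2 * k = d + 3 := by omega
  have e2 : 2 * k + 2 + d - 2 * k = d + 2 := by omega
  have e3 : 2 * k + 2 + d - 1 - 2 * k = d + 1 := by omega
  rw [e1, e2, e3, lucasStar_pos x s (by omega), lucasStar_pos x s (by omega),
    lucasP_add_two x s (d + 1)]
  cases k with
  | zero => simp
  | succ j =>
    rw [if_neg (by omega)]
    have : (2 * (j + 1) + 2 + d + 1).choose (j + 1)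
        = (2 * (j + 1) + 2 + d).choose j + (2 * (j + 1) + 2 + d).choose (j + 1) :=
      Nat.choose_succ_succ' _ _
    rw [this]
    simp only [Nat.add_sub_cancel]
    push_cast
    ring

/-- the final term in the even case -/
private lemma last_even {R : Type*} [CommRing R] (x s : R) (m : ℕ) :
    (-s) ^ m * ((2 * m + 1).choose m : R) * lucasStar x s (2 * m + 1 - 2 * m)
      - x * ((-s) ^ m * ((2 * m).choose m : R) * lucasStar x s (2 * m - 2 * m))
    = (if m = 0 then 0 else (-s) ^ m * ((2 * m).choose (m - 1) : R) *
        lucasP x s (2 * m + 1 - 2 * m)) := by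
  have e1 : 2 * m + 1 - 2 * m = 1 := by omega
  have e2 : 2 * m - 2 * m = 0 := by omega
  rw [e1, e2]
  cases m with
  | zero => simp [lucasStar, lucasP]
  | succ p =>
    rw [if_neg (by omega)]
    have : (2 * (p + 1) + 1).choose (p + 1)
        = (2 * (p + 1)).choose p + (2 * (p + 1)).choose (p + 1) :=
      Nat.choose_succ_succ' _ _
    rw [this]
    simp only [Nat.add_sub_cancel, lucasStar, if_neg one_ne_zero, if_pos rfl]
    show _ * _ * lucasP x s 1 - _ = _ * _ * lucasP x s 1
    simp only [lucasP]
    push_cast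
    ring

/-- the final two terms in the odd case -/
private lemma last_odd {R : Type*} [CommRing R] (x s : R) (p : ℕ) :
    ((-s) ^ (p + 1) * ((2 * (p + 1) + 1 + 1).choose (p + 1) : R)
        * lucasStar x s (2 * (p + 1) + 1 + 1 - 2 * (p + 1))
      - x * ((-s) ^ (p + 1) * ((2 * (p + 1) + 1).choose (p + 1) : R)
        * lucasStar x s (2 * (p + 1) + 1 - 2 * (p + 1))))
      + (-s) ^ (p + 1 + 1) * ((2 * (p + 1) + 1 + 1).choose (p + 1 + 1) : R)
        * lucasStar x s (2 * (p + 1) + 1 + 1 - 2 * (p + 1 + 1))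
    = (if p + 1 = 0 then 0 else (-s) ^ (p + 1) * ((2 * (p + 1) + 1).choose (p + 1 - 1) : R)
        * lucasP x s (2 * (p + 1) + 1 + 1 - 2 * (p + 1))) := by
  have e1 : 2 * (p + 1) + 1 + 1 - 2 * (p + 1) = 2 := by omega
  have e2 : 2 * (p + 1) + 1 - 2 * (p + 1) = 1 := by omega
  have e3 : 2 * (p + 1) + 1 + 1 - 2 * (p + 1 + 1) = 0 := by omega
  have e4 : 2 * (p + 1) + 1 + 1 - 2 * (p + 1) = 2 := by omega
  rw [e2, e3, if_neg (Nat.succ_ne_zero p)]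
  rw [show (2 * (p + 1) + 1 + 1 - 2 * (p + 1)) = 2 from e4]
  have h1 : (2 * (p + 1) + 1 + 1).choose (p + 1)
      = (2 * (p + 1) + 1).choose p + (2 * (p + 1) + 1).choose (p + 1) :=
    Nat.choose_succ_succ' _ _
  have h2 : (2 * (p + 1) + 1 + 1).choose (p + 1 + 1)
      = (2 * (p + 1) + 1).choose (p + 1) + (2 * (p + 1) + 1).choose (p + 1 + 1) :=
    Nat.choose_succ_succ' _ _
  have h3 : (2 * (p + 1) + 1).choose (p + 1 + 1) = (2 * (p + 1) + 1).choose (p + 1) :=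
    Nat.choose_symm_half (p + 1)
  rw [h1, h2, h3]
  simp only [Nat.add_sub_cancel, lucasStar, if_neg (Nat.succ_ne_zero 1),
    if_neg one_ne_zero, if_pos rfl]
  show _ * _ * lucasP x s 2 - _ + _ = _ * _ * lucasP x s 2
  show _ * _ * (x * lucasP x s 1 + s * lucasP x s 0) - _ + _
      = _ * _ * (x * lucasP x s 1 + s * lucasP x s 0)
  simp only [lucasP]
  push_cast
  ring

private lemma key {R : Type*} [CommRing R] (x s : R) (n : ℕ) :
    ∑ k ∈ Finset.range ((n + 1) / 2 + 1),
        (-s) ^ k * ((n + 1).choose k : R) * lucasStar x s (n + 1 - 2 * k)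
    = x * ∑ k ∈ Finset.range (n / 2 + 1),
        (-s) ^ k * (n.choose k : R) * lucasStar x s (n - 2 * k) := by
  set g : ℕ → R := fun j =>
    if j = 0 then 0 else (-s) ^ j * (n.choose (j - 1) : R) * lucasP x s (n + 1 - 2 * j) with hg
  obtain ⟨m, rfl | rfl⟩ := Nat.even_or_odd' n
  · -- n = 2 * m
    rw [show (2 * m + 1) / 2 + 1 = m + 1 from by omega, show 2 * m / 2 + 1 = m + 1 from by omega,
      Finset.mul_sum, ← sub_eq_zero, ← Finset.sum_sub_distrib, Finset.sum_range_succ]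
    have h1 : ∑ k ∈ Finset.range m,
        ((-s) ^ k * ((2 * m + 1).choose k : R) * lucasStar x s (2 * m + 1 - 2 * k)
          - x * ((-s) ^ k * ((2 * m).choose k : R) * lucasStar x s (2 * m - 2 * k)))
        = g 0 - g m := by
      rw [← Finset.sum_range_sub' g m]
      refine Finset.sum_congr rfl fun k hk => ?_
      have hk' : k < m := Finset.mem_range.mp hk
      rw [tele x s (2 * m) k (by omega)]
      simp only [hg, if_neg (Nat.succ_ne_zero k), Nat.add_sub_cancel,
        show 2 * m + 1 - 2 * (k + 1) = 2 * m - 1 - 2 * k from by omega]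
    rw [h1, last_even x s m]
    simp [hg]
  · -- n = 2 * m + 1
    rw [show (2 * m + 1 + 1) / 2 + 1 = m + 2 from by omega,
      show (2 * m + 1) / 2 + 1 = m + 1 from by omega,
      Finset.mul_sum, ← sub_eq_zero, Finset.sum_range_succ, add_sub_right_comm,
      ← Finset.sum_sub_distrib, Finset.sum_range_succ]
    have h1 : ∑ k ∈ Finset.range m,
        ((-s) ^ k * ((2 * m + 1 + 1).choose k : R) * lucasStar x s (2 * m + 1 + 1 - 2 * k)
          - x * ((-s) ^ k * ((2 * m + 1).choose k : R) * lucasStar x s (2 * m + 1 - 2 * k)))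
        = g 0 - g m := by
      rw [← Finset.sum_range_sub' g m]
      refine Finset.sum_congr rfl fun k hk => ?_
      have hk' : k < m := Finset.mem_range.mp hk
      rw [tele x s (2 * m + 1) k (by omega)]
      simp only [hg, if_neg (Nat.succ_ne_zero k), Nat.add_sub_cancel,
        show 2 * m + 1 + 1 - 2 * (k + 1) = 2 * m + 1 - 1 - 2 * k from by omega]
    rw [h1]
    cases m with
    | zero =>
      simp only [hg, if_pos rfl]
      norm_num [lucasStar, lucasP, Finset.sum_range_succ]
    | succ p =>
      rw [add_assoc, last_odd x s p]
      simp [hg]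

theorem lucasStar_sum {R : Type*} [CommRing R] (x s : R) (n : ℕ) :
    ∑ k ∈ Finset.range (n / 2 + 1),
        (-s) ^ k * (Nat.choose n k : R) * lucasStar x s (n - 2 * k) = x ^ n := by
  induction n with
  | zero => simp [lucasStar]
  | succ n ih =>
    rw [key x s n, ih, ← pow_succ']
end

section
/- The q-Fibonacci polynomials Fib_n satisfy the D-recurrence Fib_n(x,s,q) = x Fib_{n-1}(x,s,q) + (q-1) s D Fib_{n-1}(x,s,q) + s Fib_{n-2}(x,s,q), where D is the q-differentiation operator in x: (Df)(x) = (f(x) - f(qx))/((1-q)x). -/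
def qFib {K : Type*} [Field K] (q : K) : ℕ → K → K → K
  | 0, _, _ => 0
  | 1, _, _ => 1
  | n + 2, x, s => x * qFib q (n + 1) x (q * s) + q * s * qFib q n x (q * s)

lemma qFib_key {K : Type*} [Field K] (q : K) : ∀ (n : ℕ) (x s : K),
    x * qFib q (n + 2) x s =
      x ^ 2 * qFib q (n + 1) x s + s * qFib q (n + 1) (q * x) s
        - s * qFib q (n + 1) x s + s * x * qFib q n x s
  | 0, x, s => by simp [qFib]; ring
  | 1, x, s => by simp [qFib]; ring
  | n + 2, x, s => by
    have h1 := qFib_key q (n + 1) x (q * s)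
    have h2 := qFib_key q n x (q * s)
    simp only [qFib] at h1 h2 ⊢
    linear_combination x * h1 + s * h2

theorem qFib_D_recurrence {K : Type*} [Field K] (q x s : K) (hq : q ≠ 1) (hx : x ≠ 0)
    (n : ℕ) (hn : 2 ≤ n) :
    qFib q n x s =
      x * qFib q (n - 1) x s +
        (q - 1) * s * ((qFib q (n - 1) x s - qFib q (n - 1) (q * x) s) / ((1 - q) * x)) +
        s * qFib q (n - 2) x s := by
  obtain ⟨m, rfl⟩ : ∃ m, n = m + 2 := ⟨n - 2, by omega⟩
  have hq' : (1 : K) - q ≠ 0 := sub_ne_zero.mpr (Ne.symm hq)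
  have key := qFib_key q m x s
  simp only [Nat.add_sub_cancel, show m + 2 - 1 = m + 1 from rfl]
  field_simp
  rw [mul_comm x q]
  linear_combination (1 - q) * key
end
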